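/- arXiv:1811.00200 — 2 statements merged into one kernel-verified Lean document; each statement's English description precedes it below -/
import Mathlib

section
/- Let N ≥ 2, T ≥ 1, and set β = max{1/2, 1 − √((log N)/T)}. Then for any sequence of binary losses l_{t,i} ∈ {0,1}, the cumulative expected loss of the Randomized Weighted-Majority algorithm satisfies 𝓛_T ≤ 𝓛_T^min + 2·√(T · log N). -/
open Finset Real

/-- Weight of expert `i` in the Randomized Weighted-Majority algorithm.
Rounds are indexed starting from `0`, so `rwmWeight β l i t` is the weight
`w_{t+1, i}` of the paper: the initial weight (`t = 0`) is `1`, and the weight is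
multiplied by `β` each time the expert incurs a loss of `1`. -/
noncomputable def rwmWeight (β : ℝ) (l : ℕ → ℕ → ℝ) (i : ℕ) : ℕ → ℝ
  | 0 => 1
  | t + 1 => if l t i = 1 then β * rwmWeight β l i t else rwmWeight β l i t

/-- Total weight `W_{t+1} = ∑_{i=1}^N w_{t+1, i}`. -/
noncomputable def rwmTotalWeight (β : ℝ) (l : ℕ → ℕ → ℝ) (N t : ℕ) : ℝ :=
  ∑ i ∈ Finset.range N, rwmWeight β l i t

/-- Expected loss of the RWM algorithm at round `t`:
`L_t = ∑_{i=1}^N p_{t,i} l_{t,i}` with `p_{t,i} = w_{t,i} / W_t`. -/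
noncomputable def rwmRoundLoss (β : ℝ) (l : ℕ → ℕ → ℝ) (N t : ℕ) : ℝ :=
  ∑ i ∈ Finset.range N, (rwmWeight β l i t / rwmTotalWeight β l N t) * l t i

/-- Cumulative expected loss `𝓛_T = ∑_{t=1}^T L_t` of the RWM algorithm. -/
noncomputable def rwmCumLoss (β : ℝ) (l : ℕ → ℕ → ℝ) (N T : ℕ) : ℝ :=
  ∑ t ∈ Finset.range T, rwmRoundLoss β l N t

/-- Cumulative loss `𝓛_{T,i} = ∑_{t=1}^T l_{t,i}` of expert `i`. -/
noncomputable def rwmExpertLoss (l : ℕ → ℕ → ℝ) (i T : ℕ) : ℝ :=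
  ∑ t ∈ Finset.range T, l t i

lemma neg_log_one_sub_le {x : ℝ} (h0 : 0 ≤ x) (h2 : x ≤ 1/2) :
    -Real.log (1 - x) ≤ x + x ^ 2 := by
  have hx1 : |x| < 1 := by rw [abs_of_nonneg h0]; linarith
  have h := Real.abs_log_sub_add_sum_range_le hx1 4
  rw [abs_of_nonneg h0] at h
  have hsum : ∑ i ∈ range 4, x ^ (i+1) / ((i:ℝ)+1) = x + x^2/2 + x^3/3 + x^4/4 := by
    simp [Finset.sum_range_succ]
    ring
  rw [hsum] at h
  have h1 : -(x^5/(1-x)) ≤ (x + x^2/2 + x^3/3 + x^4/4) + Real.log (1-x) := neg_le_of_abs_le h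
  have hx : (0:ℝ) < 1 - x := by linarith
  have h5 : x^5/(1-x) ≤ 2*x^5 := by
    rw [div_le_iff₀ hx]; nlinarith [pow_nonneg h0 5, pow_nonneg h0 6]
  nlinarith [pow_nonneg h0 3, pow_nonneg h0 4, pow_nonneg h0 5, sq_nonneg x,
    mul_nonneg (mul_nonneg h0 h0) h0]

lemma rwmWeight_pos {β : ℝ} (hβ : 0 < β) (l : ℕ → ℕ → ℝ) (i t : ℕ) :
    0 < rwmWeight β l i t := by
  induction t with
  | zero => norm_num [rwmWeight]
  | succ t ih =>
      rw [rwmWeight]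
      split <;> [exact mul_pos hβ ih; exact ih]

lemma rwmTotalWeight_pos {β : ℝ} (hβ : 0 < β) (l : ℕ → ℕ → ℝ) {N : ℕ} (hN : 1 ≤ N) (t : ℕ) :
    0 < rwmTotalWeight β l N t :=
  Finset.sum_pos (fun i _ => rwmWeight_pos hβ l i t) (Finset.nonempty_range_iff.mpr (by omega))

lemma rwmWeight_eq_exp {β : ℝ} (hβ : 0 < β) {l : ℕ → ℕ → ℝ} {N T : ℕ}
    (hl : ∀ t < T, ∀ i < N, l t i = 0 ∨ l t i = 1) {i : ℕ} (hi : i < N)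
    {t : ℕ} (ht : t ≤ T) :
    rwmWeight β l i t = Real.exp (rwmExpertLoss l i t * Real.log β) := by
  induction t with
  | zero => simp [rwmWeight, rwmExpertLoss]
  | succ t ih =>
      have ht' : t ≤ T := by omega
      have hE : rwmExpertLoss l i (t+1) = rwmExpertLoss l i t + l t i := by
        rw [rwmExpertLoss, Finset.sum_range_succ, rwmExpertLoss]
      rcases hl t (by omega) i hi with h0 | h1
      · rw [rwmWeight]; rw [if_neg (by rw [h0]; norm_num), hE, h0, add_zero, ih ht']
      · rw [rwmWeight, if_pos h1, hE, h1, ih ht', add_mul, one_mul, Real.exp_add,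
          Real.exp_log hβ, mul_comm]

lemma rwmTotalWeight_succ {β : ℝ} (hβ : 0 < β) {l : ℕ → ℕ → ℝ} {N T : ℕ} (hN : 1 ≤ N)
    (hl : ∀ t < T, ∀ i < N, l t i = 0 ∨ l t i = 1) {t : ℕ} (ht : t < T) :
    rwmTotalWeight β l N (t+1) =
      rwmTotalWeight β l N t * (1 - (1-β) * rwmRoundLoss β l N t) := by
  have hW := (rwmTotalWeight_pos hβ l hN t).ne'
  have step : ∀ i ∈ Finset.range N,
      rwmWeight β l i (t+1) = rwmWeight β l i t - (1-β) * (rwmWeight β l i t * l t i) := by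
    intro i hi
    rcases hl t ht i (Finset.mem_range.mp hi) with h0 | h1
    · rw [rwmWeight, if_neg (by rw [h0]; norm_num), h0]; ring
    · rw [rwmWeight, if_pos h1, h1]; ring
  have key : rwmTotalWeight β l N t * rwmRoundLoss β l N t
      = ∑ i ∈ Finset.range N, rwmWeight β l i t * l t i := by
    rw [rwmRoundLoss, Finset.mul_sum]
    refine Finset.sum_congr rfl fun i _ => ?_
    rw [← mul_assoc, mul_div_cancel₀ _ hW]
  rw [rwmTotalWeight, Finset.sum_congr rfl step, Finset.sum_sub_distrib, ← Finset.mul_sum,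
    mul_sub, mul_one, show rwmTotalWeight β l N t * ((1-β) * rwmRoundLoss β l N t)
      = (1-β) * (rwmTotalWeight β l N t * rwmRoundLoss β l N t) by ring, key]
  rfl

lemma rwmRoundLoss_nonneg {β : ℝ} (hβ : 0 < β) {l : ℕ → ℕ → ℝ} {N T : ℕ}
    (hl : ∀ t < T, ∀ i < N, l t i = 0 ∨ l t i = 1) {t : ℕ} (ht : t < T) :
    0 ≤ rwmRoundLoss β l N t := by
  refine Finset.sum_nonneg fun i hi => ?_
  have hN : 1 ≤ N := by have := Finset.mem_range.mp hi; omega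
  have hw := (rwmWeight_pos hβ l i t).le
  have hW := (rwmTotalWeight_pos hβ l hN t).le
  have hl' : 0 ≤ l t i := by
    rcases hl t ht i (Finset.mem_range.mp hi) with h | h <;> rw [h] <;> norm_num
  positivity

lemma rwmRoundLoss_le_one {β : ℝ} (hβ : 0 < β) {l : ℕ → ℕ → ℝ} {N T : ℕ} (hN : 1 ≤ N)
    (hl : ∀ t < T, ∀ i < N, l t i = 0 ∨ l t i = 1) {t : ℕ} (ht : t < T) :
    rwmRoundLoss β l N t ≤ 1 := by
  have hW := rwmTotalWeight_pos hβ l hN t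
  have : rwmRoundLoss β l N t ≤ ∑ i ∈ Finset.range N, rwmWeight β l i t / rwmTotalWeight β l N t := by
    refine Finset.sum_le_sum fun i hi => ?_
    have hp : 0 ≤ rwmWeight β l i t / rwmTotalWeight β l N t :=
      div_nonneg (rwmWeight_pos hβ l i t).le hW.le
    rcases hl t ht i (Finset.mem_range.mp hi) with h | h <;> rw [h] <;> simp [hp]
  refine this.trans ?_
  rw [← Finset.sum_div, ← rwmTotalWeight, div_self hW.ne']

lemma rwmTotalWeight_le {β : ℝ} (hβ : 0 < β) {l : ℕ → ℕ → ℝ} {N T : ℕ} (hN : 1 ≤ N)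
    (hl : ∀ t < T, ∀ i < N, l t i = 0 ∨ l t i = 1) :
    rwmTotalWeight β l N T ≤ N * Real.exp (-((1-β) * rwmCumLoss β l N T)) := by
  have main : ∀ t ≤ T, rwmTotalWeight β l N t ≤ N * Real.exp (-((1-β) * rwmCumLoss β l N t)) := by
    intro t ht
    induction t with
    | zero => simp [rwmTotalWeight, rwmCumLoss, rwmWeight]
    | succ t ih =>
        have ht' : t < T := by omega
        have h1 := rwmTotalWeight_succ hβ hN hl ht'
        have hWpos := rwmTotalWeight_pos hβ l hN t
        have h2 : 1 - (1-β) * rwmRoundLoss β l N t ≤ Real.exp (-((1-β) * rwmRoundLoss β l N t)) := by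
          have := Real.add_one_le_exp (-((1-β) * rwmRoundLoss β l N t))
          linarith
        have hC : rwmCumLoss β l N (t+1) = rwmCumLoss β l N t + rwmRoundLoss β l N t := by
          rw [rwmCumLoss, Finset.sum_range_succ]; rfl
        calc rwmTotalWeight β l N (t+1)
            ≤ rwmTotalWeight β l N t * Real.exp (-((1-β) * rwmRoundLoss β l N t)) := by
              rw [h1]; exact mul_le_mul_of_nonneg_left h2 hWpos.le
          _ ≤ (N * Real.exp (-((1-β) * rwmCumLoss β l N t))) * Real.exp (-((1-β) * rwmRoundLoss β l N t)) :=
              mul_le_mul_of_nonneg_right (ih (by omega)) (Real.exp_pos _).le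
          _ = N * Real.exp (-((1-β) * rwmCumLoss β l N (t+1))) := by
              rw [hC, mul_assoc, ← Real.exp_add]; ring_nf
  exact main T le_rfl

lemma rwm_core {N T : ℕ} (hN : 1 ≤ N) {β : ℝ} (hβ : 0 < β)
    {l : ℕ → ℕ → ℝ} (hl : ∀ t < T, ∀ i < N, l t i = 0 ∨ l t i = 1)
    {i : ℕ} (hi : i < N) :
    (1-β) * rwmCumLoss β l N T ≤ Real.log N - rwmExpertLoss l i T * Real.log β := by
  have h1 : rwmWeight β l i T ≤ rwmTotalWeight β l N T :=
    Finset.single_le_sum (f := fun j => rwmWeight β l j T)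
      (fun j _ => (rwmWeight_pos hβ l j T).le) (Finset.mem_range.mpr hi)
  have h2 := (rwmWeight_eq_exp hβ hl hi le_rfl ▸ h1).trans (rwmTotalWeight_le hβ hN hl)
  have hNpos : (0:ℝ) < N := by positivity
  rw [show (N:ℝ) * Real.exp (-((1-β) * rwmCumLoss β l N T))
      = Real.exp (Real.log N + -((1-β) * rwmCumLoss β l N T)) by
    rw [Real.exp_add, Real.exp_log hNpos]] at h2
  have := Real.exp_le_exp.mp h2
  linarith

/-- for `N ≥ 2`, `T ≥ 1` and `β = max {1/2, 1 − √((log N)/T)}`,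
`𝓛_T ≤ 𝓛_T^min + 2 √(T log N)` for any binary losses. -/
theorem rwm_optimized_loss_bound (N T : ℕ) (hN : 2 ≤ N) (hT : 1 ≤ T)
    (β : ℝ) (hβ : β = max (1 / 2) (1 - Real.sqrt (Real.log N / T)))
    (l : ℕ → ℕ → ℝ) (hl : ∀ t < T, ∀ i < N, l t i = 0 ∨ l t i = 1) :
    rwmCumLoss β l N T ≤
      (Finset.range N).inf' (Finset.nonempty_range_iff.mpr (by omega))
          (fun i => rwmExpertLoss l i T)
        + 2 * Real.sqrt (T * Real.log N) := by
  have hN1 : 1 ≤ N := by omega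
  have hNR : (1:ℝ) < N := by exact_mod_cast (by omega : 1 < N)
  have hlogN : 0 < Real.log N := Real.log_pos hNR
  have hTR : (0:ℝ) < T := by exact_mod_cast (by omega : 0 < T)
  set s := Real.sqrt (Real.log N / T) with hs
  have hs0 : 0 < s := Real.sqrt_pos.mpr (by positivity)
  have hs2 : s^2 = Real.log N / T := Real.sq_sqrt (by positivity)
  have hlogN_eq : Real.log N = T * s^2 := by rw [hs2]; field_simp
  obtain ⟨i₀, hi₀mem, hi₀⟩ := Finset.exists_mem_eq_inf' (Finset.nonempty_range_iff.mpr (by omega : N ≠ 0))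
    (fun i => rwmExpertLoss l i T)
  have hi₀N : i₀ < N := Finset.mem_range.mp hi₀mem
  have hE0 : 0 ≤ rwmExpertLoss l i₀ T := by
    refine Finset.sum_nonneg fun t ht => ?_
    rcases hl t (Finset.mem_range.mp ht) i₀ hi₀N with h | h <;> rw [h] <;> norm_num
  have hET : rwmExpertLoss l i₀ T ≤ T := by
    calc rwmExpertLoss l i₀ T ≤ ∑ t ∈ Finset.range T, (1:ℝ) := by
          refine Finset.sum_le_sum fun t ht => ?_
          rcases hl t (Finset.mem_range.mp ht) i₀ hi₀N with h | h <;> rw [h] <;> norm_num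
      _ = T := by simp
  rw [hi₀]
  rcases le_or_gt s (1/2) with hcase | hcase
  · -- β = 1 - s
    have hβeq : β = 1 - s := by rw [hβ, max_eq_right (by linarith)]
    have hβ0 : 0 < β := by rw [hβeq]; linarith
    have hcore := rwm_core hN1 hβ0 hl hi₀N
    have hlogβ : -Real.log β ≤ s + s^2 := by
      rw [hβeq]; exact neg_log_one_sub_le hs0.le hcase
    have h1 : s * rwmCumLoss β l N T ≤ Real.log N + rwmExpertLoss l i₀ T * (s + s^2) := by
      have h2 : -(rwmExpertLoss l i₀ T * Real.log β) ≤ rwmExpertLoss l i₀ T * (s + s^2) := by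
        rw [← mul_neg]
        exact mul_le_mul_of_nonneg_left hlogβ hE0
      have heq : 1 - β = s := by rw [hβeq]; ring
      rw [heq] at hcore
      linarith [hcore]
    have hsqrt : Real.sqrt (T * Real.log N) = T * s := by
      rw [hlogN_eq, show (T:ℝ) * (T * s^2) = (T*s)^2 by ring, Real.sqrt_sq (by positivity)]
    rw [hsqrt]
    have h3 : s * rwmCumLoss β l N T ≤ s * (rwmExpertLoss l i₀ T + 2 * (T * s)) := by
      have hE2 : rwmExpertLoss l i₀ T * s^2 ≤ T * s^2 :=
        mul_le_mul_of_nonneg_right hET (by positivity)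
      nlinarith [h1, hlogN_eq]
    exact le_of_mul_le_mul_left h3 hs0
  · -- β = 1/2, trivial bound
    have hβ0 : 0 < β := by rw [hβ]; positivity
    have hcum : rwmCumLoss β l N T ≤ T := by
      calc rwmCumLoss β l N T ≤ ∑ t ∈ Finset.range T, (1:ℝ) :=
            Finset.sum_le_sum fun t ht => rwmRoundLoss_le_one hβ0 hN1 hl (Finset.mem_range.mp ht)
        _ = T := by simp
    have hTle : (T:ℝ) ≤ 2 * Real.sqrt (T * Real.log N) := by
      have h4 : (T:ℝ)/2 < T * s := by nlinarith
      have hsqrt : Real.sqrt (T * Real.log N) = T * s := by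
        rw [hlogN_eq, show (T:ℝ) * (T * s^2) = (T*s)^2 by ring, Real.sqrt_sq (by positivity)]
      rw [hsqrt]; linarith
    linarith
end

section
/- Fix β ∈ (0,1) and N ≥ 1. For any T ≥ 1 and any sequence of binary losses l_{t,i} ∈ {0,1}, the Randomized Weighted-Majority algorithm satisfies 𝓛_T^min · log β ≤ log N − (1 − β)·𝓛_T. -/
open Finset Real

lemma rwmWeight_log {β : ℝ} (hβ : 0 < β) (l : ℕ → ℕ → ℝ) (i : ℕ) {T : ℕ}
    (hl : ∀ t < T, l t i = 0 ∨ l t i = 1) {t : ℕ} (ht : t ≤ T) :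
    Real.log (rwmWeight β l i t) = rwmExpertLoss l i t * Real.log β := by
  induction t with
  | zero => simp [rwmWeight, rwmExpertLoss]
  | succ t ih =>
    have hlt : t < T := by omega
    have ih' := ih (by omega)
    rw [rwmExpertLoss, Finset.sum_range_succ, ← rwmExpertLoss]
    rcases hl t hlt with h | h
    · simp only [rwmWeight, h]
      norm_num [ih']
    · simp only [rwmWeight, h, if_pos]
      rw [Real.log_mul (ne_of_gt hβ) (ne_of_gt (rwmWeight_pos hβ l i t)), ih']
      ring

lemma rwmTotalWeight_step {β : ℝ} (hβ : 0 < β) (l : ℕ → ℕ → ℝ) {N : ℕ} (hN : 1 ≤ N)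
    {t : ℕ} (hl : ∀ i < N, l t i = 0 ∨ l t i = 1) :
    rwmTotalWeight β l N (t + 1)
      = rwmTotalWeight β l N t * (1 - (1 - β) * rwmRoundLoss β l N t) := by
  have hW : rwmTotalWeight β l N t ≠ 0 := ne_of_gt (rwmTotalWeight_pos hβ l hN t)
  have h1 : rwmRoundLoss β l N t * rwmTotalWeight β l N t
      = ∑ i ∈ Finset.range N, rwmWeight β l i t * l t i := by
    rw [rwmRoundLoss, Finset.sum_mul]
    exact Finset.sum_congr rfl fun i _ => by field_simp
  have h2 : rwmTotalWeight β l N t * (1 - (1 - β) * rwmRoundLoss β l N t)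
      = rwmTotalWeight β l N t
        - (1 - β) * (rwmRoundLoss β l N t * rwmTotalWeight β l N t) := by ring
  rw [h2, h1, rwmTotalWeight, rwmTotalWeight, Finset.mul_sum, ← Finset.sum_sub_distrib]
  refine Finset.sum_congr rfl fun i hi => ?_
  rcases hl i (Finset.mem_range.mp hi) with h | h
  · simp only [rwmWeight, h]
    norm_num
  · simp only [rwmWeight, h, if_pos]
    ring

lemma rwmTotalWeight_log_le {β : ℝ} (hβ₁ : 0 < β) (l : ℕ → ℕ → ℝ) {N T : ℕ}
    (hN : 1 ≤ N) (hl : ∀ t < T, ∀ i < N, l t i = 0 ∨ l t i = 1) {s : ℕ} (hs : s ≤ T) :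
    Real.log (rwmTotalWeight β l N s)
      ≤ Real.log N - (1 - β) * rwmCumLoss β l N s := by
  induction s with
  | zero => simp [rwmTotalWeight, rwmWeight, rwmCumLoss]
  | succ s ih =>
    have hst : s < T := by omega
    have ih' := ih (by omega)
    have hstep := rwmTotalWeight_step hβ₁ l hN (fun i hi => hl s hst i hi)
    have hWpos := rwmTotalWeight_pos hβ₁ l hN s
    have hWpos' := rwmTotalWeight_pos hβ₁ l hN (s + 1)
    have hxpos : 0 < 1 - (1 - β) * rwmRoundLoss β l N s := by
      by_contra h
      push_neg at h
      nlinarith [hstep]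
    have hlog : Real.log (1 - (1 - β) * rwmRoundLoss β l N s)
        ≤ - ((1 - β) * rwmRoundLoss β l N s) := by
      have := Real.log_le_sub_one_of_pos hxpos
      linarith
    rw [hstep, Real.log_mul (ne_of_gt hWpos) (ne_of_gt hxpos)]
    rw [rwmCumLoss, Finset.sum_range_succ, ← rwmCumLoss]
    have : Real.log N - (1 - β) * (rwmCumLoss β l N s + rwmRoundLoss β l N s)
        = (Real.log N - (1 - β) * rwmCumLoss β l N s)
          + (- ((1 - β) * rwmRoundLoss β l N s)) := by ring
    rw [this]
    exact add_le_add ih' hlog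

/-- for `β ∈ (0,1)`, `N ≥ 1`, `T ≥ 1` and binary losses,
`𝓛_T^min · log β ≤ log N − (1 − β) 𝓛_T`. -/
theorem rwm_log_potential_bound (β : ℝ) (hβ₁ : 0 < β) (hβ₂ : β < 1)
    (N T : ℕ) (hN : 1 ≤ N) (hT : 1 ≤ T) (l : ℕ → ℕ → ℝ)
    (hl : ∀ t < T, ∀ i < N, l t i = 0 ∨ l t i = 1) :
    (Finset.range N).inf' (Finset.nonempty_range_iff.mpr (by omega))
        (fun i => rwmExpertLoss l i T) * Real.log β
      ≤ Real.log N - (1 - β) * rwmCumLoss β l N T := by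
  obtain ⟨i, hi, hieq⟩ := Finset.exists_mem_eq_inf' (Finset.nonempty_range_iff.mpr
    (by omega : N ≠ 0)) (fun i => rwmExpertLoss l i T)
  have hiN : i < N := Finset.mem_range.mp hi
  rw [hieq]
  have h1 : rwmExpertLoss l i T * Real.log β = Real.log (rwmWeight β l i T) :=
    (rwmWeight_log hβ₁ l i (fun t ht => hl t ht i hiN) le_rfl).symm
  rw [h1]
  have h2 : rwmWeight β l i T ≤ rwmTotalWeight β l N T :=
    Finset.single_le_sum (fun j _ => (rwmWeight_pos hβ₁ l j T).le) hi
  calc Real.log (rwmWeight β l i T)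
      ≤ Real.log (rwmTotalWeight β l N T) :=
        Real.log_le_log (rwmWeight_pos hβ₁ l i T) h2
    _ ≤ Real.log N - (1 - β) * rwmCumLoss β l N T :=
        rwmTotalWeight_log_le hβ₁ l hN hl le_rfl
end
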